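/- The graph G_k is an induced subgraph of an ABC graph: one can extend the cliques A and C of G_k by new vertices to cliques A' and C' of size k⁴ such that the edges between A' and B form a half graph, the edges between B and C' form a half graph, and there are no edges between A' and C'. -/

import Mathlib

open Finset
open scoped Classical

variable {V : Type*}

/-- `sdPair G x y`: the number of vertices other than `x, y` adjacent to exactly
one of `x` and `y`. -/
noncomputable def sdPair [Fintype V] (G : SimpleGraph V) (x y : V) : ℕ :=
  (univ.filter fun z => z ≠ x ∧ z ≠ y ∧ ¬(G.Adj z x ↔ G.Adj z y)).card

/-- The set `B = ⋃_{i,j ∈ [k]} B_{ij} ⊆ ℤ²`, where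
`B₁₁ = {(pk − q, qk + p) : 1 ≤ p ≤ k, 0 ≤ q ≤ k − 1}` and
`B_{ij} = B₁₁ + ((i−1)k², (j−1)k²)`. -/
noncomputable def Bset (k : ℕ) : Finset (ℤ × ℤ) :=
  ((Finset.Icc (1 : ℤ) k ×ˢ Finset.Icc (0 : ℤ) ((k : ℤ) - 1)) ×ˢ
      (Finset.Icc (1 : ℤ) k ×ˢ Finset.Icc (1 : ℤ) k)).image
    fun x => (x.1.1 * k - x.1.2 + (x.2.1 - 1) * (k : ℤ) ^ 2,
              x.1.2 * k + x.1.1 + (x.2.2 - 1) * (k : ℤ) ^ 2)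

lemma digitEq {k a a' b b' : ℤ} (hb0 : 0 ≤ b) (hbk : b < k) (hb0' : 0 ≤ b') (hbk' : b' < k)
    (h : a * k + b = a' * k + b') : a = a' ∧ b = b' := by
  have hkpos : 0 < k := lt_of_le_of_lt hb0 hbk
  have ha : a = a' := by
    by_contra hne
    rcases lt_or_gt_of_ne hne with h1 | h1
    · have h2 : a + 1 ≤ a' := h1
      nlinarith [mul_le_mul_of_nonneg_right h2 hkpos.le]
    · have h2 : a' + 1 ≤ a := h1
      nlinarith [mul_le_mul_of_nonneg_right h2 hkpos.le]
  exact ⟨ha, by rw [ha] at h; linarith⟩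

lemma edivEq {n c r : ℤ} (hn : n ≠ 0) (h0 : 0 ≤ r) (h1 : r < n) : (c * n + r) / n = c := by
  rw [add_comm, Int.add_mul_ediv_right _ _ hn, Int.ediv_eq_zero_of_lt h0 h1, zero_add]

lemma mem_Bset_elim {k : ℕ} {b : ℤ × ℤ} (hb : b ∈ Bset k) :
    ∃ p q i j : ℤ, 1 ≤ p ∧ p ≤ k ∧ 0 ≤ q ∧ q ≤ (k:ℤ) - 1 ∧ 1 ≤ i ∧ i ≤ k ∧ 1 ≤ j ∧ j ≤ k ∧
      b.1 = p * k - q + (i - 1) * (k:ℤ)^2 ∧ b.2 = q * k + p + (j - 1) * (k:ℤ)^2 := by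
  simp only [Bset, mem_image, mem_product, mem_Icc] at hb
  obtain ⟨⟨⟨p, q⟩, i, j⟩, ⟨⟨⟨hp1, hp2⟩, hq1, hq2⟩, ⟨hi1, hi2⟩, hj1, hj2⟩, hbe⟩ := hb
  exact ⟨p, q, i, j, hp1, hp2, hq1, hq2, hi1, hi2, hj1, hj2, by rw [← hbe], by rw [← hbe]⟩

lemma paramX {K p q i p' q' i' : ℤ} (hK : 2 ≤ K)
    (hp1 : 1 ≤ p) (hp2 : p ≤ K) (hq1 : 0 ≤ q) (hq2 : q ≤ K - 1) (hi1 : 1 ≤ i) (hi2 : i ≤ K)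
    (hp1' : 1 ≤ p') (hp2' : p' ≤ K) (hq1' : 0 ≤ q') (hq2' : q' ≤ K - 1)
    (hi1' : 1 ≤ i') (hi2' : i' ≤ K)
    (hx : p * K - q + (i - 1) * K ^ 2 = p' * K - q' + (i' - 1) * K ^ 2) :
    p = p' ∧ q = q' ∧ i = i' := by
  have hx2 : (i - 1) * K ^ 2 + ((p - 1) * K + (K - 1 - q)) =
      (i' - 1) * K ^ 2 + ((p' - 1) * K + (K - 1 - q')) := by linear_combination hx
  have hin : ∀ p q : ℤ, 1 ≤ p → p ≤ K → 0 ≤ q → q ≤ K - 1 →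
      0 ≤ (p - 1) * K + (K - 1 - q) ∧ (p - 1) * K + (K - 1 - q) < K ^ 2 := by
    intro p q h1 h2 h3 h4
    constructor
    · nlinarith
    · nlinarith [mul_le_mul_of_nonneg_right (show p - 1 ≤ K - 1 by linarith) (show (0:ℤ) ≤ K by linarith)]
  obtain ⟨ha, hb⟩ := digitEq (hin p q hp1 hp2 hq1 hq2).1 (hin p q hp1 hp2 hq1 hq2).2
    (hin p' q' hp1' hp2' hq1' hq2').1 (hin p' q' hp1' hp2' hq1' hq2').2 hx2
  obtain ⟨hc, hd⟩ := digitEq (by linarith) (by linarith) (by linarith) (by linarith) hb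
  exact ⟨by linarith, by linarith, by linarith⟩

lemma paramY {K p q j p' q' j' : ℤ} (hK : 2 ≤ K)
    (hp1 : 1 ≤ p) (hp2 : p ≤ K) (hq1 : 0 ≤ q) (hq2 : q ≤ K - 1) (hj1 : 1 ≤ j) (hj2 : j ≤ K)
    (hp1' : 1 ≤ p') (hp2' : p' ≤ K) (hq1' : 0 ≤ q') (hq2' : q' ≤ K - 1)
    (hj1' : 1 ≤ j') (hj2' : j' ≤ K)
    (hy : q * K + p + (j - 1) * K ^ 2 = q' * K + p' + (j' - 1) * K ^ 2) :
    p = p' ∧ q = q' ∧ j = j' := by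
  have hy2 : (j - 1) * K ^ 2 + (q * K + (p - 1)) =
      (j' - 1) * K ^ 2 + (q' * K + (p' - 1)) := by linear_combination hy
  have hin : ∀ p q : ℤ, 1 ≤ p → p ≤ K → 0 ≤ q → q ≤ K - 1 →
      0 ≤ q * K + (p - 1) ∧ q * K + (p - 1) < K ^ 2 := by
    intro p q h1 h2 h3 h4
    constructor
    · nlinarith
    · nlinarith [mul_le_mul_of_nonneg_right h4 (show (0:ℤ) ≤ K by linarith)]
  obtain ⟨ha, hb⟩ := digitEq (hin p q hp1 hp2 hq1 hq2).1 (hin p q hp1 hp2 hq1 hq2).2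
    (hin p' q' hp1' hp2' hq1' hq2').1 (hin p' q' hp1' hp2' hq1' hq2').2 hy2
  obtain ⟨hc, hd⟩ := digitEq (by linarith) (by linarith) (by linarith) (by linarith) hb
  exact ⟨by linarith, by linarith, by linarith⟩
-- continuation, to be appended to t3
noncomputable def rInt (k : ℕ) (b : ℤ × ℤ) : ℤ := (b.1 - 1) * k + (b.2 - 1) / (k:ℤ)^2
noncomputable def sInt (k : ℕ) (b : ℤ × ℤ) : ℤ := (b.2 - 1) * k + (b.1 - 1) / (k:ℤ)^2

lemma edivX {k : ℕ} (hK : 2 ≤ (k:ℤ)) {b : ℤ × ℤ} {p q i : ℤ}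
    (hp1 : 1 ≤ p) (hp2 : p ≤ k) (hq1 : 0 ≤ q) (hq2 : q ≤ (k:ℤ) - 1)
    (hbx : b.1 = p * k - q + (i - 1) * (k:ℤ)^2) :
    (b.1 - 1) / (k:ℤ)^2 = i - 1 := by
  have h : b.1 - 1 = (i - 1) * (k:ℤ)^2 + (p * k - q - 1) := by rw [hbx]; ring
  rw [h, edivEq (by positivity) (by nlinarith) (by nlinarith)]

lemma edivY {k : ℕ} (hK : 2 ≤ (k:ℤ)) {b : ℤ × ℤ} {p q j : ℤ}
    (hp1 : 1 ≤ p) (hp2 : p ≤ k) (hq1 : 0 ≤ q) (hq2 : q ≤ (k:ℤ) - 1)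
    (hby : b.2 = q * k + p + (j - 1) * (k:ℤ)^2) :
    (b.2 - 1) / (k:ℤ)^2 = j - 1 := by
  have h : b.2 - 1 = (j - 1) * (k:ℤ)^2 + (q * k + p - 1) := by rw [hby]; ring
  rw [h, edivEq (by positivity) (by nlinarith) (by nlinarith [mul_le_mul_of_nonneg_right hq2 (show (0:ℤ) ≤ k by linarith)])]

/-- all bounds needed downstream -/
lemma Bset_facts {k : ℕ} (hK : 2 ≤ (k:ℤ)) {b : ℤ × ℤ} (hb : b ∈ Bset k) :
    1 ≤ b.1 ∧ b.1 ≤ (k:ℤ)^3 ∧ 1 ≤ b.2 ∧ b.2 ≤ (k:ℤ)^3 ∧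
    0 ≤ (b.2 - 1) / (k:ℤ)^2 ∧ (b.2 - 1) / (k:ℤ)^2 ≤ (k:ℤ) - 1 ∧
    0 ≤ (b.1 - 1) / (k:ℤ)^2 ∧ (b.1 - 1) / (k:ℤ)^2 ≤ (k:ℤ) - 1 := by
  obtain ⟨p, q, i, j, hp1, hp2, hq1, hq2, hi1, hi2, hj1, hj2, hbx, hby⟩ := mem_Bset_elim hb
  have h1 : (0:ℤ) ≤ (k:ℤ) := by linarith
  have h2 : (0:ℤ) ≤ (k:ℤ)^2 := by positivity
  have hxi := edivX hK hp1 hp2 hq1 hq2 hbx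
  have hyj := edivY hK hp1 hp2 hq1 hq2 hby
  have hiK : (i - 1) * (k:ℤ)^2 ≤ ((k:ℤ) - 1) * (k:ℤ)^2 :=
    mul_le_mul_of_nonneg_right (by linarith) h2
  have hjK : (j - 1) * (k:ℤ)^2 ≤ ((k:ℤ) - 1) * (k:ℤ)^2 :=
    mul_le_mul_of_nonneg_right (by linarith) h2
  have hiK0 : 0 ≤ (i - 1) * (k:ℤ)^2 := mul_nonneg (by linarith) h2
  have hjK0 : 0 ≤ (j - 1) * (k:ℤ)^2 := mul_nonneg (by linarith) h2
  have hpk : p * (k:ℤ) ≤ (k:ℤ) * (k:ℤ) := mul_le_mul_of_nonneg_right hp2 h1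
  have hpk1 : (k:ℤ) ≤ p * (k:ℤ) := by nlinarith
  have hqk : q * (k:ℤ) ≤ ((k:ℤ) - 1) * (k:ℤ) := mul_le_mul_of_nonneg_right hq2 h1
  have hqk0 : 0 ≤ q * (k:ℤ) := mul_nonneg hq1 h1
  refine ⟨by rw [hbx]; nlinarith, by rw [hbx]; nlinarith, by rw [hby]; nlinarith,
    by rw [hby]; nlinarith, by rw [hyj]; linarith, by rw [hyj]; linarith,
    by rw [hxi]; linarith, by rw [hxi]; linarith⟩

lemma rInt_bounds {k : ℕ} (hK : 2 ≤ (k:ℤ)) {b : ℤ × ℤ} (hb : b ∈ Bset k) :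
    0 ≤ rInt k b ∧ rInt k b < (k:ℤ)^4 ∧ 0 ≤ sInt k b ∧ sInt k b < (k:ℤ)^4 := by
  obtain ⟨hx1, hx2, hy1, hy2, he1, he2, hf1, hf2⟩ := Bset_facts hK hb
  have h1 : (0:ℤ) ≤ (k:ℤ) := by linarith
  have hxk : (b.1 - 1) * (k:ℤ) ≤ ((k:ℤ)^3 - 1) * (k:ℤ) :=
    mul_le_mul_of_nonneg_right (by linarith) h1
  have hyk : (b.2 - 1) * (k:ℤ) ≤ ((k:ℤ)^3 - 1) * (k:ℤ) :=
    mul_le_mul_of_nonneg_right (by linarith) h1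
  have hxk0 : 0 ≤ (b.1 - 1) * (k:ℤ) := mul_nonneg (by linarith) h1
  have hyk0 : 0 ≤ (b.2 - 1) * (k:ℤ) := mul_nonneg (by linarith) h1
  refine ⟨?_, ?_, ?_, ?_⟩ <;> simp only [rInt, sInt] <;> nlinarith

lemma keyAB {k : ℕ} (hK : 2 ≤ (k:ℤ)) {b : ℤ × ℤ} (hb : b ∈ Bset k) {i' : ℤ} (hi : 0 ≤ i') :
    i' * (k:ℤ) + ((k:ℤ) - 1) < rInt k b ↔ i' + 1 < b.1 := by
  obtain ⟨hx1, hx2, hy1, hy2, he1, he2, hf1, hf2⟩ := Bset_facts hK hb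
  unfold rInt
  constructor
  · intro h
    by_contra hc
    push_neg at hc
    have : (b.1 - 1) * (k:ℤ) ≤ i' * (k:ℤ) :=
      mul_le_mul_of_nonneg_right (by linarith) (by linarith)
    linarith
  · intro h
    have : (i' + 1) * (k:ℤ) ≤ (b.1 - 1) * (k:ℤ) :=
      mul_le_mul_of_nonneg_right (by linarith) (by linarith)
    nlinarith

lemma keyBC {k : ℕ} (hK : 2 ≤ (k:ℤ)) {b : ℤ × ℤ} (hb : b ∈ Bset k) {j' : ℤ} (hj : 0 ≤ j') :
    sInt k b < j' * (k:ℤ) ↔ b.2 < j' + 1 := by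
  obtain ⟨hx1, hx2, hy1, hy2, he1, he2, hf1, hf2⟩ := Bset_facts hK hb
  unfold sInt
  constructor
  · intro h
    by_contra hc
    push_neg at hc
    have : j' * (k:ℤ) ≤ (b.2 - 1) * (k:ℤ) :=
      mul_le_mul_of_nonneg_right (by linarith) (by linarith)
    linarith
  · intro h
    have : (b.2 - 1) * (k:ℤ) ≤ (j' - 1) * (k:ℤ) :=
      mul_le_mul_of_nonneg_right (by linarith) (by linarith)
    nlinarith

lemma rInt_injOn {k : ℕ} (hK : 2 ≤ (k:ℤ)) {b b' : ℤ × ℤ} (hb : b ∈ Bset k) (hb' : b' ∈ Bset k)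
    (h : rInt k b = rInt k b') : b = b' := by
  obtain ⟨p, q, i, j, hp1, hp2, hq1, hq2, hi1, hi2, hj1, hj2, hbx, hby⟩ := mem_Bset_elim hb
  obtain ⟨p', q', i', j', hp1', hp2', hq1', hq2', hi1', hi2', hj1', hj2', hbx', hby'⟩ :=
    mem_Bset_elim hb'
  have hyj := edivY hK hp1 hp2 hq1 hq2 hby
  have hyj' := edivY hK hp1' hp2' hq1' hq2' hby'
  unfold rInt at h
  rw [hyj, hyj'] at h
  obtain ⟨hb1, hjj⟩ := digitEq (by linarith) (by linarith) (by linarith) (by linarith) h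
  have hb1' : b.1 = b'.1 := by linarith
  have hx : p * (k:ℤ) - q + (i - 1) * (k:ℤ)^2 = p' * (k:ℤ) - q' + (i' - 1) * (k:ℤ)^2 := by
    rw [hbx, hbx'] at hb1'; exact hb1'
  obtain ⟨hpp, hqq, -⟩ := paramX hK hp1 hp2 hq1 hq2 hi1 hi2 hp1' hp2' hq1' hq2' hi1' hi2' hx
  have hb2 : b.2 = b'.2 := by rw [hby, hby', hpp, hqq, show j = j' by linarith]
  exact Prod.ext hb1' hb2

lemma sInt_injOn {k : ℕ} (hK : 2 ≤ (k:ℤ)) {b b' : ℤ × ℤ} (hb : b ∈ Bset k) (hb' : b' ∈ Bset k)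
    (h : sInt k b = sInt k b') : b = b' := by
  obtain ⟨p, q, i, j, hp1, hp2, hq1, hq2, hi1, hi2, hj1, hj2, hbx, hby⟩ := mem_Bset_elim hb
  obtain ⟨p', q', i', j', hp1', hp2', hq1', hq2', hi1', hi2', hj1', hj2', hbx', hby'⟩ :=
    mem_Bset_elim hb'
  have hxi := edivX hK hp1 hp2 hq1 hq2 hbx
  have hxi' := edivX hK hp1' hp2' hq1' hq2' hbx'
  unfold sInt at h
  rw [hxi, hxi'] at h
  obtain ⟨hb2, hii⟩ := digitEq (by linarith) (by linarith) (by linarith) (by linarith) h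
  have hb2' : b.2 = b'.2 := by linarith
  have hy : q * (k:ℤ) + p + (j - 1) * (k:ℤ)^2 = q' * (k:ℤ) + p' + (j' - 1) * (k:ℤ)^2 := by
    rw [hby, hby'] at hb2'; exact hb2'
  obtain ⟨hpp, hqq, -⟩ := paramY hK hp1 hp2 hq1 hq2 hj1 hj2 hp1' hp2' hq1' hq2' hj1' hj2' hy
  have hb1 : b.1 = b'.1 := by rw [hbx, hbx', hpp, hqq, show i = i' by linarith]
  exact Prod.ext hb1 hb2'

lemma card_Bset {k : ℕ} (hK : 2 ≤ (k:ℤ)) : (Bset k).card = k ^ 4 := by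
  rw [Bset, Finset.card_image_of_injOn, Finset.card_product, Finset.card_product,
    Finset.card_product]
  · simp only [Int.card_Icc]
    have h1 : ((k:ℤ) + 1 - 1).toNat = k := by omega
    have h2 : ((k:ℤ) - 1 + 1 - 0).toNat = k := by omega
    rw [h1, h2]
    ring
  · rintro ⟨⟨p, q⟩, i, j⟩ hm ⟨⟨p', q'⟩, i', j'⟩ hm' heq
    simp only [Finset.coe_product, Set.mem_prod, Finset.mem_coe, Finset.mem_Icc] at hm hm'
    obtain ⟨⟨⟨hp1, hp2⟩, hq1, hq2⟩, ⟨hi1, hi2⟩, hj1, hj2⟩ := hm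
    obtain ⟨⟨⟨hp1', hp2'⟩, hq1', hq2'⟩, ⟨hi1', hi2'⟩, hj1', hj2'⟩ := hm'
    simp only [Prod.mk.injEq] at heq
    obtain ⟨hx, hy⟩ := heq
    obtain ⟨hpp, hqq, hii⟩ := paramX hK hp1 hp2 hq1 hq2 hi1 hi2 hp1' hp2' hq1' hq2' hi1' hi2' hx
    obtain ⟨-, -, hjj⟩ := paramY hK hp1 hp2 hq1 hq2 hj1 hj2 hp1' hp2' hq1' hq2' hj1' hj2' hy
    simp [hpp, hqq, hii, hjj]


/-- Vertices of the graph `G_k`: the clique `A = {a_1, …, a_{k³}}`, the clique `B`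
(one vertex for each point of `Bset k`), and the clique `C = {c_1, …, c_{k³}}`.
Here `Fin (k^3)` index `i` represents `a_{i+1}` (resp. `c_{i+1}`). -/
abbrev GkVtx (k : ℕ) := Fin (k ^ 3) ⊕ ({ b : ℤ × ℤ // b ∈ Bset k } ⊕ Fin (k ^ 3))

/-- The underlying relation of `G_k`: `A`, `B`, `C` are cliques, `a_i` is adjacent
to `(b_x, b_y) ∈ B` iff `i < b_x`, `(b_x, b_y)` is adjacent to `c_j` iff `b_y < j`,
and there are no `A`–`C` edges. -/
def GkRel (k : ℕ) : GkVtx k → GkVtx k → Prop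
  | Sum.inl i, Sum.inl j => i ≠ j
  | Sum.inl i, Sum.inr (Sum.inl b) => (i : ℤ) + 1 < b.1.1
  | Sum.inr (Sum.inl b), Sum.inr (Sum.inl b') => b ≠ b'
  | Sum.inr (Sum.inl b), Sum.inr (Sum.inr j) => b.1.2 < (j : ℤ) + 1
  | Sum.inr (Sum.inr i), Sum.inr (Sum.inr j) => i ≠ j
  | _, _ => False

/-- The graph `G_k`. -/
def Gk (k : ℕ) : SimpleGraph (GkVtx k) := SimpleGraph.fromRel (GkRel k)

/-- `G_k` is an induced subgraph of an ABC graph: there is a graph `H` on three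
cliques of size `k⁴` (parts `0`, `1`, `2` of `Fin 3 × Fin (k⁴)`), with no edges
between parts `0` and `2`, whose part `0`–part `1` edges and part `1`–part `2`
edges each form a half graph (under suitable orderings `α`, `β` of part `1`), and
a graph embedding of `G_k` into `H` sending `A` into part `0`, `B` into part `1`
and `C` into part `2`. -/
theorem Gk_induced_subgraph_of_ABC (k : ℕ) (hk : 2 ≤ k) :
    ∃ (H : SimpleGraph (Fin 3 × Fin (k ^ 4))) (α β : Equiv.Perm (Fin (k ^ 4))),
      (∀ m : Fin 3, ∀ i j : Fin (k ^ 4), H.Adj (m, i) (m, j) ↔ i ≠ j) ∧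
      (∀ i j, H.Adj (0, i) (1, j) ↔ i < α j) ∧
      (∀ i j, H.Adj (1, i) (2, j) ↔ β i < j) ∧
      (∀ i j, ¬ H.Adj (0, i) (2, j)) ∧
      ∃ φ : Gk k ↪g H,
        (∀ i : Fin (k ^ 3), ∃ i', φ (Sum.inl i) = ((0 : Fin 3), i')) ∧
        (∀ b : { b : ℤ × ℤ // b ∈ Bset k }, ∃ b',
          φ (Sum.inr (Sum.inl b)) = ((1 : Fin 3), b')) ∧
        (∀ j : Fin (k ^ 3), ∃ j', φ (Sum.inr (Sum.inr j)) = ((2 : Fin 3), j')) := by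
  have hK : (2:ℤ) ≤ (k:ℤ) := by exact_mod_cast hk
  have hk0 : 0 < k := by omega
  have hcard : Fintype.card {b : ℤ × ℤ // b ∈ Bset k} = k ^ 4 := by
    rw [Fintype.card_coe]; exact card_Bset hK
  have hbounds : ∀ b : {b : ℤ × ℤ // b ∈ Bset k},
      (rInt k b.1).toNat < k ^ 4 ∧ (sInt k b.1).toNat < k ^ 4 := by
    intro b
    obtain ⟨h1, h2, h3, h4⟩ := rInt_bounds hK b.2
    have h5 : ((k:ℤ))^4 = ((k^4 : ℕ) : ℤ) := by push_cast; ring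
    omega
  set n := k ^ 4 with hn
  let rF : {b : ℤ × ℤ // b ∈ Bset k} → Fin n := fun b => ⟨(rInt k b.1).toNat, (hbounds b).1⟩
  let sF : {b : ℤ × ℤ // b ∈ Bset k} → Fin n := fun b => ⟨(sInt k b.1).toNat, (hbounds b).2⟩
  have hrIntEq : ∀ b : {b : ℤ × ℤ // b ∈ Bset k}, ((rF b : Fin n).1 : ℤ) = rInt k b.1 := by
    intro b
    simp only [rF]
    exact Int.toNat_of_nonneg (rInt_bounds hK b.2).1
  have hsIntEq : ∀ b : {b : ℤ × ℤ // b ∈ Bset k}, ((sF b : Fin n).1 : ℤ) = sInt k b.1 := by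
    intro b
    simp only [sF]
    exact Int.toNat_of_nonneg (rInt_bounds hK b.2).2.2.1
  have hrInj : Function.Injective rF := by
    intro b b' h
    have h3 : rInt k b.1 = rInt k b'.1 := by
      rw [← hrIntEq b, ← hrIntEq b', h]
    exact Subtype.ext (rInt_injOn hK b.2 b'.2 h3)
  have hsInj : Function.Injective sF := by
    intro b b' h
    have h3 : sInt k b.1 = sInt k b'.1 := by
      rw [← hsIntEq b, ← hsIntEq b', h]
    exact Subtype.ext (sInt_injOn hK b.2 b'.2 h3)
  have hcard' : Fintype.card {b : ℤ × ℤ // b ∈ Bset k} = Fintype.card (Fin n) := by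
    rw [hcard, Fintype.card_fin]
  let rE := Equiv.ofBijective rF ((Fintype.bijective_iff_injective_and_card rF).mpr ⟨hrInj, hcard'⟩)
  let sE := Equiv.ofBijective sF ((Fintype.bijective_iff_injective_and_card sF).mpr ⟨hsInj, hcard'⟩)
  let β : Equiv.Perm (Fin n) := rE.symm.trans sE
  have hβr : ∀ b, β (rF b) = sF b := by
    intro b
    have h1 : rE.symm (rF b) = b := by
      rw [show rF b = rE b from rfl, Equiv.symm_apply_apply]
    rw [show β (rF b) = sE (rE.symm (rF b)) from rfl, h1]
    rfl
  -- the ABC graph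
  let R : Fin 3 × Fin n → Fin 3 × Fin n → Prop := fun u v =>
    (u.1 = v.1 ∧ u.2 ≠ v.2) ∨ (u.1 = 0 ∧ v.1 = 1 ∧ u.2 < v.2) ∨
      (u.1 = 1 ∧ v.1 = 2 ∧ β u.2 < v.2)
  let H : SimpleGraph (Fin 3 × Fin n) := SimpleGraph.fromRel R
  have hH1 : ∀ m : Fin 3, ∀ i j : Fin n, H.Adj (m, i) (m, j) ↔ i ≠ j := by
    intro m i j
    rw [SimpleGraph.fromRel_adj]
    constructor
    · rintro ⟨hne, -⟩
      exact fun h => hne (by rw [h])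
    · intro hij
      exact ⟨fun h => hij (congrArg Prod.snd h), Or.inl (Or.inl ⟨rfl, hij⟩)⟩
  have hH2 : ∀ i j : Fin n, H.Adj (0, i) (1, j) ↔ i < j := by
    intro i j
    rw [SimpleGraph.fromRel_adj]
    constructor
    · rintro ⟨-, h | h⟩
      · rcases h with ⟨h, -⟩ | ⟨-, -, h⟩ | ⟨h, -⟩
        · simp at h
        · exact h
        · simp at h
      · rcases h with ⟨h, -⟩ | ⟨h, -⟩ | ⟨-, h, -⟩
        · simp at h
        · simp at h
        · simp at h
    · intro h
      exact ⟨fun he => by simp at he,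
        Or.inl (Or.inr (Or.inl ⟨rfl, rfl, h⟩))⟩
  have hH3 : ∀ i j : Fin n, H.Adj (1, i) (2, j) ↔ β i < j := by
    intro i j
    rw [SimpleGraph.fromRel_adj]
    constructor
    · rintro ⟨-, h | h⟩
      · rcases h with ⟨h, -⟩ | ⟨h, -⟩ | ⟨-, -, h⟩
        · simp at h
        · simp at h
        · exact h
      · rcases h with ⟨h, -⟩ | ⟨h, -⟩ | ⟨h, -⟩
        · simp at h
        · simp at h
        · simp at h
    · intro h
      exact ⟨fun he => by simp at he,
        Or.inl (Or.inr (Or.inr ⟨rfl, rfl, h⟩))⟩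
  have hH4 : ∀ i j : Fin n, ¬ H.Adj (0, i) (2, j) := by
    intro i j
    rintro ⟨-, h | h⟩
    · rcases h with ⟨h, -⟩ | ⟨-, h, -⟩ | ⟨h, -⟩
      · simp at h
      · simp at h
      · simp at h
    · rcases h with ⟨h, -⟩ | ⟨h, -⟩ | ⟨h, -⟩
      · simp at h
      · simp at h
      · simp at h
  -- the embedding
  have hA : ∀ i : Fin (k^3), i.1 * k + (k - 1) < n := by
    intro i
    have h2 : (i.1 + 1) * k ≤ k ^ 3 * k := Nat.mul_le_mul_right k i.2
    have h3 : k ^ 3 * k = n := by rw [hn]; ring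
    have h4 : (i.1 + 1) * k = i.1 * k + k := by ring
    omega
  have hCb : ∀ j : Fin (k^3), j.1 * k < n := by
    intro j
    have h2 : (j.1 + 1) * k ≤ k ^ 3 * k := Nat.mul_le_mul_right k j.2
    have h3 : k ^ 3 * k = n := by rw [hn]; ring
    have h4 : (j.1 + 1) * k = j.1 * k + k := by ring
    omega
  let fA : Fin (k^3) → Fin n := fun i => ⟨i.1 * k + (k - 1), hA i⟩
  let fC : Fin (k^3) → Fin n := fun j => ⟨j.1 * k, hCb j⟩
  have fAinj : Function.Injective fA := by
    intro i i' h
    have h2 : i.1 * k + (k - 1) = i'.1 * k + (k - 1) := congrArg Fin.val h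
    exact Fin.ext (Nat.eq_of_mul_eq_mul_right hk0 (show i.1 * k = i'.1 * k by omega))
  have fCinj : Function.Injective fC := by
    intro j j' h
    have h2 : j.1 * k = j'.1 * k := congrArg Fin.val h
    exact Fin.ext (Nat.eq_of_mul_eq_mul_right hk0 h2)
  have keyA : ∀ (i : Fin (k^3)) (b : {b : ℤ × ℤ // b ∈ Bset k}),
      (fA i < rF b ↔ (i : ℤ) + 1 < b.1.1) := by
    intro i b
    have hiff := keyAB hK b.2 (show (0:ℤ) ≤ (i.1:ℤ) from Int.ofNat_nonneg _)
    have h0 : 0 ≤ rInt k b.1 := (rInt_bounds hK b.2).1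
    have hcast : ((i.1 * k + (k - 1) : ℕ) : ℤ) = (i.1:ℤ) * (k:ℤ) + ((k:ℤ) - 1) := by
      push_cast [Nat.cast_sub (show 1 ≤ k by omega)]
      ring
    rw [Fin.lt_def]
    simp only [fA, rF]
    constructor
    · intro h
      apply hiff.mp
      rw [← hcast]
      omega
    · intro h
      have h2 := hiff.mpr h
      rw [← hcast] at h2
      omega
  have keyC : ∀ (j : Fin (k^3)) (b : {b : ℤ × ℤ // b ∈ Bset k}),
      (sF b < fC j ↔ b.1.2 < (j : ℤ) + 1) := by
    intro j b
    have hiff := keyBC hK b.2 (show (0:ℤ) ≤ (j.1:ℤ) from Int.ofNat_nonneg _)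
    have h0 : 0 ≤ sInt k b.1 := (rInt_bounds hK b.2).2.2.1
    have hcast : ((j.1 * k : ℕ) : ℤ) = (j.1:ℤ) * (k:ℤ) := by push_cast; ring
    rw [Fin.lt_def]
    simp only [fC, sF]
    constructor
    · intro h
      apply hiff.mp
      rw [← hcast]
      omega
    · intro h
      have h2 := hiff.mpr h
      rw [← hcast] at h2
      omega
  let f : GkVtx k → Fin 3 × Fin n := fun v =>
    match v with
    | Sum.inl i => ((0 : Fin 3), fA i)
    | Sum.inr (Sum.inl b) => ((1 : Fin 3), rF b)
    | Sum.inr (Sum.inr j) => ((2 : Fin 3), fC j)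
  have hfInj : Function.Injective f := by
    rintro (i | b | j) (i' | b' | j') h <;> simp only [f] at h
    · exact congrArg Sum.inl (fAinj (congrArg Prod.snd h))
    · simp at h
    · simp at h
    · simp at h
    · exact congrArg (fun x => Sum.inr (Sum.inl x)) (hrInj (congrArg Prod.snd h))
    · simp at h
    · simp at h
    · simp at h
    · exact congrArg (fun x => Sum.inr (Sum.inr x)) (fCinj (congrArg Prod.snd h))
  have hGk : ∀ u v, (Gk k).Adj u v ↔ u ≠ v ∧ (GkRel k u v ∨ GkRel k v u) :=
    fun u v => SimpleGraph.fromRel_adj _ u v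
  have hGkAA : ∀ i i' : Fin (k^3), (Gk k).Adj (Sum.inl i) (Sum.inl i') ↔ i ≠ i' := by
    intro i i'
    rw [hGk]
    constructor
    · rintro ⟨-, h | h⟩
      · exact h
      · exact fun he => h (he ▸ rfl)
    · intro h
      exact ⟨fun he => h (Sum.inl.inj he), Or.inl h⟩
  have hGkAB : ∀ (i : Fin (k^3)) (b : {b : ℤ × ℤ // b ∈ Bset k}),
      (Gk k).Adj (Sum.inl i) (Sum.inr (Sum.inl b)) ↔ (i : ℤ) + 1 < b.1.1 := by
    intro i b
    rw [hGk]
    constructor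
    · rintro ⟨-, h | h⟩
      · exact h
      · exact h.elim
    · intro h
      exact ⟨by simp, Or.inl h⟩
  have hGkAC : ∀ (i j : Fin (k^3)),
      ¬ (Gk k).Adj (Sum.inl i) (Sum.inr (Sum.inr j)) := by
    intro i j hadj
    rw [hGk] at hadj
    rcases hadj with ⟨-, h | h⟩
    · exact h.elim
    · exact h.elim
  have hGkBB : ∀ b b' : {b : ℤ × ℤ // b ∈ Bset k},
      (Gk k).Adj (Sum.inr (Sum.inl b)) (Sum.inr (Sum.inl b')) ↔ b ≠ b' := by
    intro b b'
    rw [hGk]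
    constructor
    · rintro ⟨-, h | h⟩
      · exact h
      · exact fun he => h (he ▸ rfl)
    · intro h
      exact ⟨fun he => h (Sum.inl.inj (Sum.inr.inj he)), Or.inl h⟩
  have hGkBC : ∀ (b : {b : ℤ × ℤ // b ∈ Bset k}) (j : Fin (k^3)),
      (Gk k).Adj (Sum.inr (Sum.inl b)) (Sum.inr (Sum.inr j)) ↔ b.1.2 < (j : ℤ) + 1 := by
    intro b j
    rw [hGk]
    constructor
    · rintro ⟨-, h | h⟩
      · exact h
      · exact h.elim
    · intro h
      exact ⟨by simp, Or.inl h⟩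
  have hGkCC : ∀ j j' : Fin (k^3),
      (Gk k).Adj (Sum.inr (Sum.inr j)) (Sum.inr (Sum.inr j')) ↔ j ≠ j' := by
    intro j j'
    rw [hGk]
    constructor
    · rintro ⟨-, h | h⟩
      · exact h
      · exact fun he => h (he ▸ rfl)
    · intro h
      exact ⟨fun he => h (Sum.inr.inj (Sum.inr.inj he)), Or.inl h⟩
  have hfRel : ∀ u v, H.Adj (f u) (f v) ↔ (Gk k).Adj u v := by
    rintro (i | b | j) (i' | b' | j')
    · show H.Adj ((0 : Fin 3), fA i) ((0 : Fin 3), fA i') ↔ _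
      rw [hH1, hGkAA]
      exact ⟨fun h he => h (by rw [he]), fun h he => h (fAinj he)⟩
    · show H.Adj ((0 : Fin 3), fA i) ((1 : Fin 3), rF b') ↔ _
      rw [hH2, hGkAB]
      exact keyA i b'
    · show H.Adj ((0 : Fin 3), fA i) ((2 : Fin 3), fC j') ↔ _
      constructor
      · intro h
        exact absurd h (hH4 _ _)
      · intro h
        exact absurd h (hGkAC _ _)
    · show H.Adj ((1 : Fin 3), rF b) ((0 : Fin 3), fA i') ↔ _
      rw [H.adj_comm, (Gk k).adj_comm, hH2, hGkAB]
      exact keyA i' b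
    · show H.Adj ((1 : Fin 3), rF b) ((1 : Fin 3), rF b') ↔ _
      rw [hH1, hGkBB]
      exact ⟨fun h he => h (by rw [he]), fun h he => h (hrInj he)⟩
    · show H.Adj ((1 : Fin 3), rF b) ((2 : Fin 3), fC j') ↔ _
      rw [hH3, hGkBC, hβr]
      exact keyC j' b
    · show H.Adj ((2 : Fin 3), fC j) ((0 : Fin 3), fA i') ↔ _
      constructor
      · intro h
        exact absurd (H.adj_comm _ _ |>.mp h) (hH4 _ _)
      · intro h
        exact absurd ((Gk k).adj_comm _ _ |>.mp h) (hGkAC _ _)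
    · show H.Adj ((2 : Fin 3), fC j) ((1 : Fin 3), rF b') ↔ _
      rw [H.adj_comm, (Gk k).adj_comm, hH3, hGkBC, hβr]
      exact keyC j b'
    · show H.Adj ((2 : Fin 3), fC j) ((2 : Fin 3), fC j') ↔ _
      rw [hH1, hGkCC]
      exact ⟨fun h he => h (by rw [he]), fun h he => h (fCinj he)⟩
  refine ⟨H, Equiv.refl _, β, hH1, ?_, hH3, fun i j => hH4 i j, ?_⟩
  · intro i j
    simp only [Equiv.refl_apply]
    exact hH2 i j
  · refine ⟨⟨⟨f, hfInj⟩, fun {a b} => hfRel a b⟩, ?_, ?_, ?_⟩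
    · intro i
      exact ⟨fA i, rfl⟩
    · intro b
      exact ⟨rF b, rfl⟩
    · intro j
      exact ⟨fC j, rfl⟩
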